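/- For all simple CO problems P and Q, the four properties P ≡^s_g Q, P ≡^{s,=1}_g Q, P ≡^{s,=1} Q and P ≡^s Q are equivalent. -/

import Mathlib

open scoped Classical

/-- Propositional formulas over a universe `U` of atoms, built from atoms,
`⊥`, conjunction, disjunction and implication. -/
inductive Formula (U : Type) : Type where
  | atom : U → Formula U
  | bot  : Formula U
  | conj : Formula U → Formula U → Formula U
  | disj : Formula U → Formula U → Formula U
  | imp  : Formula U → Formula U → Formula U

variable {U : Type}

/-- Classical satisfaction `I ⊨ φ`. -/
def Sat (I : Set U) : Formula U → Prop
  | .atom a => a ∈ I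
  | .bot => False
  | .conj φ ψ => Sat I φ ∧ Sat I ψ
  | .disj φ ψ => Sat I φ ∨ Sat I ψ
  | .imp φ ψ => Sat I φ → Sat I ψ

/-- Classical satisfaction of a theory. -/
def SatTheory (I : Set U) (T : Set (Formula U)) : Prop := ∀ φ ∈ T, Sat I φ

/-- `Mod T`: the classical models of a theory `T`. -/
def models (T : Set (Formula U)) : Set (Set U) := {I | SatTheory I T}

/-- HT-satisfaction `⟨I, J⟩ ⊨_HT φ` (for `I ⊆ J`). -/
def SatHT (I J : Set U) : Formula U → Prop
  | .atom a => a ∈ I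
  | .bot => False
  | .conj φ ψ => SatHT I J φ ∧ SatHT I J ψ
  | .disj φ ψ => SatHT I J φ ∨ SatHT I J ψ
  | .imp φ ψ => Sat J (Formula.imp φ ψ) ∧ (¬ SatHT I J φ ∨ SatHT I J ψ)

/-- HT-satisfaction of a theory. -/
def SatHTTheory (I J : Set U) (T : Set (Formula U)) : Prop := ∀ φ ∈ T, SatHT I J φ

/-- `HT T`: the set of HT-models `⟨I,J⟩` (with `I ⊆ J`) of a theory `T`. -/
def HTmod (T : Set (Formula U)) : Set (Set U × Set U) :=
  {p | p.1 ⊆ p.2 ∧ SatHTTheory p.1 p.2 T}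

/-- `AS T`: the equilibrium models (answer sets) of a theory `T`. -/
def AS (T : Set (Formula U)) : Set (Set U) :=
  {I | SatHTTheory I I T ∧ ∀ J : Set U, J ⊂ I → ¬ SatHTTheory J I T}

/-- A ranked preference rule `φ₁ > ⋯ > φₖ ←ʲ ψ` with nonempty head and rank `j ≥ 1`. -/
structure Rule (U : Type) : Type where
  head : List (Formula U)
  body : Formula U
  rank : ℕ
  head_ne : head ≠ []
  rank_pos : 1 ≤ rank

/-- Satisfaction degree `v_I(r)`: the least (1-based) index of a satisfied head formula
if `I` satisfies the body and some head formula; `1` otherwise. -/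
noncomputable def degree (I : Set U) (r : Rule U) : ℕ :=
  if Sat I r.body ∧ ∃ φ ∈ r.head, Sat I φ then
    sInf {n : ℕ | ∃ k : Fin r.head.length, n = k.1 + 1 ∧ Sat I (r.head.get k)}
  else 1

/-- The strict preference `I >^S J` induced by a selector `S`. -/
def gtSel (S : Set (Rule U)) (I J : Set U) : Prop :=
  ∃ r' ∈ S, degree I r' < degree J r' ∧
    (∀ r ∈ S, r.rank = r'.rank → degree I r ≤ degree J r) ∧
    (∀ r ∈ S, r.rank < r'.rank → degree I r = degree J r)

/-- The indifference `I ≈^S J` induced by a selector `S`. -/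
def simSel (S : Set (Rule U)) (I J : Set U) : Prop :=
  ∀ r ∈ S, degree I r = degree J r

/-- The preference `I ≥^S J` induced by a selector `S`. -/
def geSel (S : Set (Rule U)) (I J : Set U) : Prop :=
  simSel S I J ∨ gtSel S I J

/-- An optimization problem: a generator theory plus a finite selector. -/
structure OptProblem (U : Type) : Type where
  gen : Set (Formula U)
  sel : Set (Rule U)
  sel_finite : sel.Finite

/-- Union of optimization problems. -/
def OptProblem.union (P Q : OptProblem U) : OptProblem U :=
  ⟨P.gen ∪ Q.gen, P.sel ∪ Q.sel, P.sel_finite.union Q.sel_finite⟩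

/-- `P_{<i}`: the restriction of `P` to preference rules of rank `< i`. -/
def OptProblem.below (P : OptProblem U) (i : ℕ) : OptProblem U :=
  ⟨P.gen, {r ∈ P.sel | r.rank < i}, P.sel_finite.subset (Set.sep_subset _ _)⟩

/-- The two semantics for generators: classical (CO problems) and
equilibrium-model/answer-set (ASO problems). -/
inductive Sem : Type where
  | co : Sem
  | aso : Sem

/-- `μ(P)`: the outcomes of `P` under the chosen semantics. -/
def outcomes (sem : Sem) (P : OptProblem U) : Set (Set U) :=
  match sem with
  | Sem.co => models P.gen
  | Sem.aso => AS P.gen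

/-- `π(P)`: the preferred (optimal) outcomes of `P`. -/
def pref (sem : Sem) (P : OptProblem U) : Set (Set U) :=
  {I | I ∈ outcomes sem P ∧ ¬ ∃ J ∈ outcomes sem P, gtSel P.sel J I}

/-- `diff^P(I,J)`: the largest `k` with `I ≈^{P_{<k}} J` (`∞` if this holds for all `k`). -/
noncomputable def diff (P : OptProblem U) (I J : Set U) : ℕ∞ :=
  if ∀ k : ℕ, simSel (P.below k).sel I J then ⊤
  else ((sSup {k : ℕ | simSel (P.below k).sel I J} : ℕ) : ℕ∞)

/-- Restriction `≻_V` of a relation on interpretations to a set `V` of interpretations. -/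
def restrictRel (rel : Set U → Set U → Prop) (V : Set (Set U)) : Set U → Set U → Prop :=
  fun A B => rel A B ∧ A ∈ V ∧ B ∈ V

/-- All rules of `S` have rank in the interval `[i,j]` (`j` may be `∞`). -/
def inRankInterval (i : ℕ) (j : ℕ∞) (S : Set (Rule U)) : Prop :=
  ∀ r ∈ S, i ≤ r.rank ∧ (r.rank : ℕ∞) ≤ j

/-- Strong sel-equivalence `P ≡^{s,[i,j]} Q`: same preferred outcomes under addition of any
context from `L^{s,[i,j]}` (empty generator, selector with ranks in `[i,j]`). -/
def seqv (sem : Sem) (i : ℕ) (j : ℕ∞) (P Q : OptProblem U) : Prop :=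
  ∀ R : OptProblem U, R.gen = ∅ → inRankInterval i j R.sel →
    pref sem (P.union R) = pref sem (Q.union R)

/-- Strong gen-equivalence `P ≡_g Q`: same preferred outcomes under addition of any
generator context from `L^g` (empty selector). -/
def geqv (sem : Sem) (P Q : OptProblem U) : Prop :=
  ∀ R : OptProblem U, R.sel = ∅ →
    pref sem (P.union R) = pref sem (Q.union R)

/-- Strong (combined) equivalence `P ≡^{s,[i,j]}_g Q`: same preferred outcomes under addition
of any context from `L^{[i,j]}` (arbitrary generator, selector with ranks in `[i,j]`). -/
def sgeqv (sem : Sem) (i : ℕ) (j : ℕ∞) (P Q : OptProblem U) : Prop :=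
  ∀ R : OptProblem U, inRankInterval i j R.sel →
    pref sem (P.union R) = pref sem (Q.union R)


/-! ### Auxiliary development -/

section Aux

variable {U : Type}

/-- The (finite) set of atoms occurring in a formula. -/
noncomputable def atomsF : Formula U → Finset U
  | .atom a => {a}
  | .bot => ∅
  | .conj φ ψ => atomsF φ ∪ atomsF ψ
  | .disj φ ψ => atomsF φ ∪ atomsF ψ
  | .imp φ ψ => atomsF φ ∪ atomsF ψ

lemma sat_agree {I J : Set U} (φ : Formula U)
    (h : ∀ a ∈ atomsF φ, (a ∈ I ↔ a ∈ J)) : Sat I φ ↔ Sat J φ := by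
  induction φ with
  | atom a =>
      have := h a (by simp [atomsF])
      simpa [Sat] using this
  | bot => exact Iff.rfl
  | conj φ ψ ihφ ihψ =>
      simp only [Sat]
      rw [ihφ (fun a ha => h a (by simp [atomsF, ha])),
          ihψ (fun a ha => h a (by simp [atomsF, ha]))]
  | disj φ ψ ihφ ihψ =>
      simp only [Sat]
      rw [ihφ (fun a ha => h a (by simp [atomsF, ha])),
          ihψ (fun a ha => h a (by simp [atomsF, ha]))]
  | imp φ ψ ihφ ihψ =>
      simp only [Sat]
      rw [ihφ (fun a ha => h a (by simp [atomsF, ha])),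
          ihψ (fun a ha => h a (by simp [atomsF, ha]))]

/-- The (finite) set of atoms occurring in a rule. -/
noncomputable def ruleAtoms (r : Rule U) : Finset U :=
  atomsF r.body ∪ r.head.foldr (fun φ s => atomsF φ ∪ s) ∅

lemma atoms_mem_foldr {φ : Formula U} : ∀ {l : List (Formula U)}, φ ∈ l →
    atomsF φ ⊆ l.foldr (fun ψ s => atomsF ψ ∪ s) ∅
  | ψ :: l, h => by
      rcases List.mem_cons.mp h with rfl | h
      · exact Finset.subset_union_left
      · exact (atoms_mem_foldr h).trans Finset.subset_union_right

lemma degree_agree {I J : Set U} {r : Rule U}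
    (h : ∀ a ∈ ruleAtoms r, (a ∈ I ↔ a ∈ J)) : degree I r = degree J r := by
  have hb : Sat I r.body ↔ Sat J r.body :=
    sat_agree _ fun a ha => h a (Finset.mem_union_left _ ha)
  have hh : ∀ φ ∈ r.head, (Sat I φ ↔ Sat J φ) := fun φ hφ =>
    sat_agree _ fun a ha => h a (Finset.mem_union_right _ (atoms_mem_foldr hφ ha))
  have hc : (Sat I r.body ∧ ∃ φ ∈ r.head, Sat I φ) ↔
      (Sat J r.body ∧ ∃ φ ∈ r.head, Sat J φ) := by
    rw [hb]
    constructor <;> rintro ⟨h1, φ, h2, h3⟩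
    · exact ⟨h1, φ, h2, (hh φ h2).mp h3⟩
    · exact ⟨h1, φ, h2, (hh φ h2).mpr h3⟩
  have hset : {n : ℕ | ∃ k : Fin r.head.length, n = k.1 + 1 ∧ Sat I (r.head.get k)} =
      {n : ℕ | ∃ k : Fin r.head.length, n = k.1 + 1 ∧ Sat J (r.head.get k)} := by
    ext n
    constructor <;> rintro ⟨k, rfl, hk⟩
    · exact ⟨k, rfl, (hh _ (r.head.get_mem _)).mp hk⟩
    · exact ⟨k, rfl, (hh _ (r.head.get_mem _)).mpr hk⟩
  unfold degree
  rw [hset]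
  exact if_congr hc rfl rfl

lemma one_le_degree (I : Set U) (r : Rule U) : 1 ≤ degree I r := by
  unfold degree
  split
  · next hcond =>
      obtain ⟨hb, φ, hφ, hsat⟩ := hcond
      obtain ⟨k, hk⟩ := List.mem_iff_get.mp hφ
      have hne : {n : ℕ | ∃ k : Fin r.head.length, n = k.1 + 1 ∧
          Sat I (r.head.get k)}.Nonempty := ⟨k.1 + 1, ⟨k, rfl, hk ▸ hsat⟩⟩
      obtain ⟨k', hk', -⟩ := Nat.sInf_mem hne
      omega
  · exact le_refl 1

/-- The literal of `I` at atom `a`. -/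
noncomputable def litOf (I : Set U) (a : U) : Formula U :=
  if a ∈ I then .atom a else .imp (.atom a) .bot

lemma sat_litOf {K I : Set U} {a : U} : Sat K (litOf I a) ↔ (a ∈ K ↔ a ∈ I) := by
  unfold litOf
  split <;> rename_i h <;> simp [Sat, h]

noncomputable def pinList (I : Set U) : List U → Formula U
  | [] => .imp .bot .bot
  | a :: l => .conj (litOf I a) (pinList I l)

lemma sat_pinList {K I : Set U} : ∀ {l : List U},
    Sat K (pinList I l) ↔ ∀ a ∈ l, (a ∈ K ↔ a ∈ I)
  | [] => by simp [pinList, Sat]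
  | a :: l => by
      simp [pinList, Sat, sat_litOf, sat_pinList (K := K) (I := I) (l := l)]

/-- Formula pinning the values of `I` on the finite atom set `A`. -/
noncomputable def pin (I : Set U) (A : Finset U) : Formula U := pinList I A.toList

lemma sat_pin {K I : Set U} {A : Finset U} :
    Sat K (pin I A) ↔ ∀ a ∈ A, (a ∈ K ↔ a ∈ I) := by
  simp [pin, sat_pinList, Finset.mem_toList]

/-- A rank-1 rule `φ > ¬φ ← ⊤` whose degree is `1` on models of `φ` and `2` elsewhere. -/
def twoRule (φ : Formula U) : Rule U :=
  ⟨[φ, .imp φ .bot], .imp .bot .bot, 1, by simp, le_refl 1⟩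

lemma rank_twoRule (φ : Formula U) : (twoRule φ).rank = 1 := rfl

lemma degree_twoRule (K : Set U) (φ : Formula U) :
    degree K (twoRule φ) = if Sat K φ then 1 else 2 := by
  have hb : Sat K (Formula.imp .bot .bot) := fun h => h
  have hcond : Sat K (twoRule φ).body ∧ ∃ ψ ∈ (twoRule φ).head, Sat K ψ := by
    refine ⟨hb, ?_⟩
    by_cases h : Sat K φ
    · exact ⟨φ, by simp [twoRule], h⟩
    · exact ⟨.imp φ .bot, by simp [twoRule], fun hc => h hc⟩
  rw [degree, if_pos hcond]
  by_cases h : Sat K φ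
  · rw [if_pos h]
    have h1 : (1 : ℕ) ∈ {n : ℕ | ∃ k : Fin (twoRule φ).head.length,
        n = k.1 + 1 ∧ Sat K ((twoRule φ).head.get k)} := ⟨⟨0, by simp [twoRule]⟩, rfl, h⟩
    refine le_antisymm (Nat.sInf_le h1) ?_
    obtain ⟨k, hk, -⟩ := Nat.sInf_mem ⟨1, h1⟩
    omega
  · rw [if_neg h]
    have hset : {n : ℕ | ∃ k : Fin (twoRule φ).head.length,
        n = k.1 + 1 ∧ Sat K ((twoRule φ).head.get k)} = {2} := by
      ext n
      simp only [Set.mem_setOf_eq, Set.mem_singleton_iff]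
      constructor
      · rintro ⟨⟨i, hi⟩, rfl, hk⟩
        have hlen : (twoRule φ).head.length = 2 := rfl
        rw [hlen] at hi
        interval_cases i
        · exact absurd hk h
        · rfl
      · rintro rfl
        exact ⟨⟨1, by simp [twoRule]⟩, rfl, fun hc => h hc⟩
    rw [hset, csInf_singleton]

lemma gt_simple_iff {S : Set (Rule U)} (hS : ∀ r ∈ S, r.rank = 1) {I J : Set U} :
    gtSel S I J ↔ (∀ r ∈ S, degree I r ≤ degree J r) ∧ ¬ simSel S I J := by
  constructor
  · rintro ⟨r', hr', hlt, hle, -⟩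
    refine ⟨fun r hr => hle r hr (by rw [hS r hr, hS r' hr']), fun hsim => ?_⟩
    rw [hsim r' hr'] at hlt
    exact lt_irrefl _ hlt
  · rintro ⟨hle, hns⟩
    have : ∃ r ∈ S, degree I r ≠ degree J r := by
      by_contra hc
      push_neg at hc
      exact hns hc
    obtain ⟨r', hr', hne⟩ := this
    refine ⟨r', hr', lt_of_le_of_ne (hle r' hr') hne, fun r hr _ => hle r hr, ?_⟩
    intro r hr hlt
    rw [hS r hr, hS r' hr'] at hlt
    omega

lemma models_union {T T' : Set (Formula U)} : models (T ∪ T') = models T ∩ models T' := by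
  ext I
  simp only [models, SatTheory, Set.mem_setOf_eq, Set.mem_inter_iff, Set.mem_union, or_imp,
    forall_and]

lemma mem_models_left {T T' : Set (Formula U)} {I : Set U} (h : I ∈ models (T ∪ T')) :
    I ∈ models T := fun ψ hψ => h ψ (Or.inl hψ)

/-! #### Step (a): equality of models -/

lemma models_subset_of_seqv {P Q : OptProblem U}
    (hP : ∀ r ∈ P.sel, r.rank = 1)
    (hs : seqv Sem.co 1 (1 : ℕ∞) P Q) : models P.gen ⊆ models Q.gen := by
  intro I hI
  by_contra hIQ
  have hex : ∃ φ ∈ Q.gen, ¬ Sat I φ := by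
    by_contra h
    push_neg at h
    exact hIQ h
  obtain ⟨φ, hφQ, hφI⟩ := hex
  set A := atomsF φ with hA
  set s := twoRule (pin I A) with hsdef
  set R : OptProblem U := ⟨∅, {s}, Set.finite_singleton s⟩ with hRdef
  have hRrank : inRankInterval 1 (1 : ℕ∞) R.sel := by
    intro r hr
    rw [Set.mem_singleton_iff.mp hr, hsdef, rank_twoRule]
    exact ⟨le_refl 1, by norm_num⟩
  set MA : Set (Set U) := {K | K ∈ models P.gen ∧ Sat K (pin I A)} with hMA
  have hIMA : I ∈ MA := ⟨hI, sat_pin.mpr fun a _ => Iff.rfl⟩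
  set f : Set U → ℕ := fun K => ∑ r ∈ P.sel_finite.toFinset, degree K r with hf
  have hne : {n : ℕ | ∃ K ∈ MA, f K = n}.Nonempty := ⟨f I, I, hIMA, rfl⟩
  obtain ⟨J₀, hJ₀MA, hJ₀f⟩ := Nat.sInf_mem hne
  have hmin : ∀ K ∈ MA, ¬ f K < f J₀ := by
    intro K hK hlt
    have h1 : sInf {n : ℕ | ∃ K ∈ MA, f K = n} ≤ f K := Nat.sInf_le ⟨K, hK, rfl⟩
    omega
  have hJ₀P : J₀ ∈ models P.gen := hJ₀MA.1
  have hJ₀pin : Sat J₀ (pin I A) := hJ₀MA.2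
  have hdegJ₀s : degree J₀ s = 1 := by rw [hsdef, degree_twoRule, if_pos hJ₀pin]
  have hpref : J₀ ∈ pref Sem.co (P.union R) := by
    refine ⟨?_, ?_⟩
    · rintro ψ (hψ | hψ)
      · exact hJ₀P ψ hψ
      · exact absurd hψ (Set.notMem_empty ψ)
    · rintro ⟨K, hKo, r', hr', hlt, hle, -⟩
      have hKP : K ∈ models P.gen := fun ψ hψ => hKo ψ (Or.inl hψ)
      have hrank1 : r'.rank = 1 := by
        rcases hr' with h | h
        · exact hP r' h
        · rw [Set.mem_singleton_iff.mp h, hsdef, rank_twoRule]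
      have hKs_le : degree K s ≤ degree J₀ s :=
        hle s (Or.inr rfl) (by rw [hsdef, rank_twoRule, hrank1])
      have hKpin : Sat K (pin I A) := by
        by_contra hc
        have h2 : degree K s = 2 := by rw [hsdef, degree_twoRule, if_neg hc]
        omega
      have hKMA : K ∈ MA := ⟨hKP, hKpin⟩
      have hr'P : r' ∈ P.sel := by
        rcases hr' with h | h
        · exact h
        · exfalso
          rw [Set.mem_singleton_iff.mp h] at hlt
          have h1 := one_le_degree K s
          omega
      have hsum : f K < f J₀ := by
        apply Finset.sum_lt_sum
        · intro r hr
          have hrP : r ∈ P.sel := (Set.Finite.mem_toFinset _).mp hr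
          exact hle r (Or.inl hrP) (by rw [hP r hrP, hrank1])
        · exact ⟨r', (Set.Finite.mem_toFinset _).mpr hr'P, hlt⟩
      exact hmin K hKMA hsum
  have hpref' : J₀ ∈ pref Sem.co (Q.union R) := (hs R rfl hRrank) ▸ hpref
  have hQJ₀ : Sat J₀ φ := hpref'.1 φ (Or.inl hφQ)
  have hiff : Sat J₀ φ ↔ Sat I φ := sat_agree φ (fun a ha => (sat_pin.mp hJ₀pin) a ha)
  exact hφI (hiff.mp hQJ₀)

/-! #### Step (b): transfer of the strict relation -/

lemma gt_of_seqv {P Q : OptProblem U}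
    (hP : ∀ r ∈ P.sel, r.rank = 1) (hQ : ∀ r ∈ Q.sel, r.rank = 1)
    (hs : seqv Sem.co 1 (1 : ℕ∞) P Q) (hmod : models P.gen = models Q.gen)
    {I J : Set U} (hIm : I ∈ models P.gen) (hJm : J ∈ models P.gen)
    (hgt : gtSel P.sel I J) : gtSel Q.sel I J := by
  by_contra hnQ
  set A : Finset U := (P.sel_finite.toFinset ∪ Q.sel_finite.toFinset).biUnion ruleAtoms with hA
  have hsubQ : ∀ r ∈ Q.sel, ruleAtoms r ⊆ A := fun r hr =>
    Finset.subset_biUnion_of_mem _ (Finset.mem_union_right _ ((Set.Finite.mem_toFinset _).mpr hr))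
  set s := twoRule (.disj (pin I A) (pin J A)) with hsdef
  set R : OptProblem U := ⟨∅, {s}, Set.finite_singleton s⟩ with hRdef
  have hRrank : inRankInterval 1 (1 : ℕ∞) R.sel := by
    intro r hr
    rw [Set.mem_singleton_iff.mp hr, hsdef, rank_twoRule]
    exact ⟨le_refl 1, by norm_num⟩
  have hsatI : Sat I (Formula.disj (pin I A) (pin J A)) :=
    Or.inl (sat_pin.mpr fun a _ => Iff.rfl)
  have hsatJ : Sat J (Formula.disj (pin I A) (pin J A)) :=
    Or.inr (sat_pin.mpr fun a _ => Iff.rfl)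
  have hdegIs : degree I s = 1 := by rw [hsdef, degree_twoRule, if_pos hsatI]
  have hdegJs : degree J s = 1 := by rw [hsdef, degree_twoRule, if_pos hsatJ]
  have hprefQ : J ∈ pref Sem.co (Q.union R) := by
    refine ⟨?_, ?_⟩
    · rintro ψ (hψ | hψ)
      · exact (hmod ▸ hJm) ψ hψ
      · exact absurd hψ (Set.notMem_empty ψ)
    · rintro ⟨K, hKo, r', hr', hlt, hle, -⟩
      have hrank1 : r'.rank = 1 := by
        rcases hr' with h | h
        · exact hQ r' h
        · rw [Set.mem_singleton_iff.mp h, hsdef, rank_twoRule]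
      have hKs : degree K s ≤ 1 :=
        hdegJs ▸ hle s (Or.inr rfl) (by rw [hsdef, rank_twoRule, hrank1])
      have hKsat : Sat K (Formula.disj (pin I A) (pin J A)) := by
        by_contra hc
        rw [hsdef, degree_twoRule, if_neg hc] at hKs
        omega
      rcases hKsat with hKI | hKJ
      · -- K agrees with I on A
        have hdegK : ∀ r ∈ Q.sel, degree K r = degree I r := fun r hr =>
          degree_agree fun a ha => (sat_pin.mp hKI) a (hsubQ r hr ha)
        have hr'Q : r' ∈ Q.sel := by
          rcases hr' with h | h
          · exact h
          · exfalso
            rw [Set.mem_singleton_iff.mp h] at hlt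
            have h1 := one_le_degree K s
            omega
        apply hnQ
        refine ⟨r', hr'Q, ?_, ?_, ?_⟩
        · rw [← hdegK r' hr'Q]
          exact hlt
        · intro r hr hrk
          rw [← hdegK r hr]
          exact hle r (Or.inl hr) hrk
        · intro r hr hrk
          rw [hQ r hr, hQ r' hr'Q] at hrk
          omega
      · -- K agrees with J on A : all degrees coincide with those of J
        have hdegK : ∀ r ∈ Q.sel, degree K r = degree J r := fun r hr =>
          degree_agree fun a ha => (sat_pin.mp hKJ) a (hsubQ r hr ha)
        rcases hr' with h | h
        · rw [hdegK r' h] at hlt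
          exact lt_irrefl _ hlt
        · rw [Set.mem_singleton_iff.mp h] at hlt
          have h1 := one_le_degree K s
          omega
  have hprefP : J ∈ pref Sem.co (P.union R) := (hs R rfl hRrank) ▸ hprefQ
  obtain ⟨p', hp'P, hplt, hple, -⟩ := hgt
  refine hprefP.2 ⟨I, ?_, p', Or.inl hp'P, hplt, ?_, ?_⟩
  · rintro ψ (hψ | hψ)
    · exact hIm ψ hψ
    · exact absurd hψ (Set.notMem_empty ψ)
  · rintro r (hr | hr) hrk
    · exact hple r hr hrk
    · rw [Set.mem_singleton_iff.mp hr, hdegIs, hdegJs]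
  · rintro r (hr | hr) hrk
    · rw [hP r hr, hP p' hp'P] at hrk
      omega
    · rw [Set.mem_singleton_iff.mp hr, hsdef, rank_twoRule, hP p' hp'P] at hrk
      omega

/-! #### Step (c): transfer of the indifference relation -/

lemma sim_of_seqv {P Q : OptProblem U}
    (hP : ∀ r ∈ P.sel, r.rank = 1) (hQ : ∀ r ∈ Q.sel, r.rank = 1)
    (hs : seqv Sem.co 1 (1 : ℕ∞) P Q) (hmod : models P.gen = models Q.gen)
    (hgtPQ : ∀ {I J : Set U}, I ∈ models P.gen → J ∈ models P.gen →
      (gtSel P.sel I J ↔ gtSel Q.sel I J))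
    {I J : Set U} (hIm : I ∈ models P.gen) (hJm : J ∈ models P.gen)
    (hsim : simSel P.sel I J) : simSel Q.sel I J := by
  by_contra hns
  have hgtP_IJ : ¬ gtSel P.sel I J := by
    rintro ⟨r', hr', hlt, -, -⟩
    rw [hsim r' hr'] at hlt
    exact lt_irrefl _ hlt
  have hgtP_JI : ¬ gtSel P.sel J I := by
    rintro ⟨r', hr', hlt, -, -⟩
    rw [hsim r' hr'] at hlt
    exact lt_irrefl _ hlt
  have hgtQ_IJ : ¬ gtSel Q.sel I J := fun h => hgtP_IJ ((hgtPQ hIm hJm).mpr h)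
  have hgtQ_JI : ¬ gtSel Q.sel J I := fun h => hgtP_JI ((hgtPQ hJm hIm).mpr h)
  have hne : ∃ q ∈ Q.sel, degree I q ≠ degree J q := by
    by_contra h
    push_neg at h
    exact hns h
  have both : (∃ q ∈ Q.sel, degree I q < degree J q) ∧
      (∃ q ∈ Q.sel, degree J q < degree I q) := by
    obtain ⟨q, hq, hneq⟩ := hne
    rcases lt_or_gt_of_ne hneq with h | h
    · refine ⟨⟨q, hq, h⟩, ?_⟩
      by_contra hno
      push_neg at hno
      exact hgtQ_IJ ⟨q, hq, h, fun r hr _ => (hno r hr), fun r hr hrk => by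
        rw [hQ r hr, hQ q hq] at hrk; omega⟩
    · refine ⟨?_, ⟨q, hq, h⟩⟩
      by_contra hno
      push_neg at hno
      exact hgtQ_JI ⟨q, hq, h, fun r hr _ => (hno r hr), fun r hr hrk => by
        rw [hQ r hr, hQ q hq] at hrk; omega⟩
  obtain ⟨⟨q₂, hq₂Q, hq₂⟩, ⟨q₁, hq₁Q, hq₁⟩⟩ := both
  have hdiffatoms : ¬ ∀ a ∈ ruleAtoms q₂, (a ∈ I ↔ a ∈ J) := fun h =>
    absurd (degree_agree h) hq₂.ne
  simp only [not_forall, Classical.not_imp] at hdiffatoms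
  obtain ⟨a₀, ha₀q, ha₀⟩ := hdiffatoms
  set A : Finset U := (P.sel_finite.toFinset ∪ Q.sel_finite.toFinset).biUnion ruleAtoms with hA
  have hsubQ : ∀ r ∈ Q.sel, ruleAtoms r ⊆ A := fun r hr =>
    Finset.subset_biUnion_of_mem _ (Finset.mem_union_right _ ((Set.Finite.mem_toFinset _).mpr hr))
  have ha₀A : a₀ ∈ A := hsubQ q₂ hq₂Q ha₀q
  set s := twoRule (.disj (pin I A) (pin J A)) with hsdef
  set t := twoRule (litOf I a₀) with htdef
  set R : OptProblem U := ⟨∅, {s, t}, (Set.finite_singleton t).insert s⟩ with hRdef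
  have hRrank : inRankInterval 1 (1 : ℕ∞) R.sel := by
    intro r hr
    rcases Set.mem_insert_iff.mp hr with h | h
    · rw [h, hsdef, rank_twoRule]
      exact ⟨le_refl 1, by norm_num⟩
    · rw [Set.mem_singleton_iff.mp h, htdef, rank_twoRule]
      exact ⟨le_refl 1, by norm_num⟩
  have hsatI : Sat I (Formula.disj (pin I A) (pin J A)) :=
    Or.inl (sat_pin.mpr fun a _ => Iff.rfl)
  have hsatJ : Sat J (Formula.disj (pin I A) (pin J A)) :=
    Or.inr (sat_pin.mpr fun a _ => Iff.rfl)
  have hdegIs : degree I s = 1 := by rw [hsdef, degree_twoRule, if_pos hsatI]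
  have hdegJs : degree J s = 1 := by rw [hsdef, degree_twoRule, if_pos hsatJ]
  have hdegIt : degree I t = 1 := by
    rw [htdef, degree_twoRule, if_pos (sat_litOf.mpr Iff.rfl)]
  have hnsatJt : ¬ Sat J (litOf I a₀) := fun h => ha₀ ((sat_litOf.mp h).symm)
  have hdegJt : degree J t = 2 := by rw [htdef, degree_twoRule, if_neg hnsatJt]
  have hsmem : s ∈ R.sel := Set.mem_insert _ _
  have htmem : t ∈ R.sel := Set.mem_insert_of_mem _ rfl
  -- J is preferred in Q ∪ R
  have hprefQ : J ∈ pref Sem.co (Q.union R) := by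
    refine ⟨?_, ?_⟩
    · rintro ψ (hψ | hψ)
      · exact (hmod ▸ hJm) ψ hψ
      · exact absurd hψ (Set.notMem_empty ψ)
    · rintro ⟨K, hKo, r', hr', hlt, hle, -⟩
      have hrank1 : r'.rank = 1 := by
        rcases hr' with h | h
        · exact hQ r' h
        · rcases Set.mem_insert_iff.mp h with h' | h'
          · rw [h', hsdef, rank_twoRule]
          · rw [Set.mem_singleton_iff.mp h', htdef, rank_twoRule]
      have hKs : degree K s ≤ 1 :=
        hdegJs ▸ hle s (Or.inr hsmem) (by rw [hsdef, rank_twoRule, hrank1])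
      have hKsat : Sat K (Formula.disj (pin I A) (pin J A)) := by
        by_contra hc
        rw [hsdef, degree_twoRule, if_neg hc] at hKs
        omega
      rcases hKsat with hKI | hKJ
      · -- K agrees with I on A; then the rule q₁ blocks K from beating J
        have hKq₁ : degree K q₁ = degree I q₁ :=
          degree_agree fun a ha => (sat_pin.mp hKI) a (hsubQ q₁ hq₁Q ha)
        have hle₁ : degree K q₁ ≤ degree J q₁ :=
          hle q₁ (Or.inl hq₁Q) (by rw [hQ q₁ hq₁Q, hrank1])
        omega
      · -- K agrees with J on A; all degrees coincide with those of J
        have hdegKQ : ∀ r ∈ Q.sel, degree K r = degree J r := fun r hr =>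
          degree_agree fun a ha => (sat_pin.mp hKJ) a (hsubQ r hr ha)
        have hKs1 : degree K s = degree J s := by
          have h1 := one_le_degree K s
          omega
        have hKt : degree K t = degree J t := by
          have : ¬ Sat K (litOf I a₀) := fun h => by
            have h1 := sat_litOf.mp h
            have h2 := (sat_pin.mp hKJ) a₀ ha₀A
            exact ha₀ (h1.symm.trans h2)
          rw [htdef, degree_twoRule, if_neg this, hdegJt]
        rcases hr' with h | h
        · rw [hdegKQ r' h] at hlt
          exact lt_irrefl _ hlt
        · rcases Set.mem_insert_iff.mp h with h' | h'
          · rw [h'] at hlt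
            rw [hKs1] at hlt
            exact lt_irrefl _ hlt
          · rw [Set.mem_singleton_iff.mp h'] at hlt
            rw [hKt] at hlt
            exact lt_irrefl _ hlt
  have hprefP : J ∈ pref Sem.co (P.union R) := (hs R rfl hRrank) ▸ hprefQ
  -- but I beats J in P ∪ R via the rule t
  refine hprefP.2 ⟨I, ?_, t, Or.inr htmem, by rw [hdegIt, hdegJt]; omega, ?_, ?_⟩
  · rintro ψ (hψ | hψ)
    · exact hIm ψ hψ
    · exact absurd hψ (Set.notMem_empty ψ)
  · rintro r (hr | hr) hrk
    · rw [hsim r hr]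
    · rcases Set.mem_insert_iff.mp hr with h' | h'
      · rw [h', hdegIs, hdegJs]
      · rw [Set.mem_singleton_iff.mp h', hdegIt, hdegJt]
        omega
  · rintro r (hr | hr) hrk
    · rw [hP r hr, htdef, rank_twoRule] at hrk
      omega
    · have h1 := r.rank_pos
      rw [htdef, rank_twoRule] at hrk
      omega

/-! #### Transfer of the strict relation across unions with arbitrary contexts -/

lemma gt_union_transfer {P Q : OptProblem U}
    (hP : ∀ r ∈ P.sel, r.rank = 1) (hQ : ∀ r ∈ Q.sel, r.rank = 1)
    (hsim : ∀ {I J : Set U}, I ∈ models P.gen → J ∈ models P.gen →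
      simSel P.sel I J → simSel Q.sel I J)
    (hgt : ∀ {I J : Set U}, I ∈ models P.gen → J ∈ models P.gen →
      gtSel P.sel I J → gtSel Q.sel I J)
    {S : Set (Rule U)} {I J : Set U} (hIm : I ∈ models P.gen) (hJm : J ∈ models P.gen)
    (h : gtSel (P.sel ∪ S) I J) : gtSel (Q.sel ∪ S) I J := by
  have hle_tr : (∀ r ∈ P.sel, degree I r ≤ degree J r) →
      ∀ r ∈ Q.sel, degree I r ≤ degree J r := by
    intro hle
    by_cases hsimP : simSel P.sel I J
    · intro r hr
      exact (hsim hIm hJm hsimP r hr).le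
    · have hgtq := hgt hIm hJm ((gt_simple_iff hP).mpr ⟨hle, hsimP⟩)
      exact ((gt_simple_iff hQ).mp hgtq).1
  obtain ⟨r', hr', hlt, hle, heq⟩ := h
  rcases hr' with hr'P | hr'S
  · -- the witness comes from P itself
    have hrank1 := hP r' hr'P
    have hleP : ∀ r ∈ P.sel, degree I r ≤ degree J r := fun r hr =>
      hle r (Or.inl hr) (by rw [hP r hr, hrank1])
    have hgtP : gtSel P.sel I J :=
      ⟨r', hr'P, hlt, fun r hr _ => hleP r hr, fun r hr hrk => by
        rw [hP r hr, hrank1] at hrk; omega⟩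
    obtain ⟨q', hq'Q, hqlt, hqle, -⟩ := hgt hIm hJm hgtP
    have hq1 := hQ q' hq'Q
    refine ⟨q', Or.inl hq'Q, hqlt, ?_, ?_⟩
    · rintro r (hr | hr) hrk
      · exact hqle r hr hrk
      · exact hle r (Or.inr hr) (by rw [hrk, hq1, hrank1])
    · intro r hr hrk
      have h1 := r.rank_pos
      rw [hq1] at hrk
      omega
  · -- the witness comes from the context S
    refine ⟨r', Or.inr hr'S, hlt, ?_, ?_⟩
    · rintro r (hr | hr) hrk
      · have h1 : r'.rank = 1 := by rw [← hrk, hQ r hr]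
        have hleP : ∀ p ∈ P.sel, degree I p ≤ degree J p := fun p hp =>
          hle p (Or.inl hp) (by rw [hP p hp, h1])
        exact hle_tr hleP r hr
      · exact hle r (Or.inr hr) hrk
    · rintro r (hr | hr) hrk
      · have h1 : 1 < r'.rank := by rw [← hQ r hr]; exact hrk
        have hsimP : simSel P.sel I J := fun p hp =>
          heq p (Or.inl hp) (by rw [hP p hp]; exact h1)
        exact hsim hIm hJm hsimP r hr
      · exact heq r (Or.inr hr) hrk

/-! #### The hard direction -/

lemma hard_direction {P Q : OptProblem U}
    (hP : ∀ r ∈ P.sel, r.rank = 1) (hQ : ∀ r ∈ Q.sel, r.rank = 1)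
    (hs : seqv Sem.co 1 (1 : ℕ∞) P Q) : sgeqv Sem.co 1 ⊤ P Q := by
  have hs' : seqv Sem.co 1 (1 : ℕ∞) Q P := fun R h1 h2 => (hs R h1 h2).symm
  have hmod : models P.gen = models Q.gen :=
    Set.Subset.antisymm (models_subset_of_seqv hP hs) (models_subset_of_seqv hQ hs')
  have hgtPQ : ∀ {I J : Set U}, I ∈ models P.gen → J ∈ models P.gen →
      gtSel P.sel I J → gtSel Q.sel I J := fun hIm hJm => gt_of_seqv hP hQ hs hmod hIm hJm
  have hgtQP : ∀ {I J : Set U}, I ∈ models Q.gen → J ∈ models Q.gen →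
      gtSel Q.sel I J → gtSel P.sel I J := fun hIm hJm =>
    gt_of_seqv hQ hP hs' hmod.symm hIm hJm
  have hgtiffP : ∀ {I J : Set U}, I ∈ models P.gen → J ∈ models P.gen →
      (gtSel P.sel I J ↔ gtSel Q.sel I J) := fun hIm hJm =>
    ⟨hgtPQ hIm hJm, hgtQP (hmod ▸ hIm) (hmod ▸ hJm)⟩
  have hgtiffQ : ∀ {I J : Set U}, I ∈ models Q.gen → J ∈ models Q.gen →
      (gtSel Q.sel I J ↔ gtSel P.sel I J) := fun hIm hJm =>
    ⟨hgtQP hIm hJm, hgtPQ (hmod.symm ▸ hIm) (hmod.symm ▸ hJm)⟩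
  have hsimPQ : ∀ {I J : Set U}, I ∈ models P.gen → J ∈ models P.gen →
      simSel P.sel I J → simSel Q.sel I J := fun hIm hJm =>
    sim_of_seqv hP hQ hs hmod hgtiffP hIm hJm
  have hsimQP : ∀ {I J : Set U}, I ∈ models Q.gen → J ∈ models Q.gen →
      simSel Q.sel I J → simSel P.sel I J := fun hIm hJm =>
    sim_of_seqv hQ hP hs' hmod.symm hgtiffQ hIm hJm
  intro R _
  apply Set.ext
  intro I
  constructor
  · rintro ⟨hIo, hIn⟩
    have hIP : I ∈ models P.gen := fun ψ hψ => hIo ψ (Or.inl hψ)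
    refine ⟨?_, ?_⟩
    · rintro ψ (hψ | hψ)
      · exact (hmod ▸ hIP) ψ hψ
      · exact hIo ψ (Or.inr hψ)
    · rintro ⟨K, hKo, hKgt⟩
      have hKQ : K ∈ models Q.gen := fun ψ hψ => hKo ψ (Or.inl hψ)
      have hKo' : K ∈ outcomes Sem.co (P.union R) := by
        rintro ψ (hψ | hψ)
        · exact (hmod.symm ▸ hKQ) ψ hψ
        · exact hKo ψ (Or.inr hψ)
      exact hIn ⟨K, hKo',
        gt_union_transfer hQ hP hsimQP hgtQP hKQ (hmod ▸ hIP) hKgt⟩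
  · rintro ⟨hIo, hIn⟩
    have hIQ : I ∈ models Q.gen := fun ψ hψ => hIo ψ (Or.inl hψ)
    refine ⟨?_, ?_⟩
    · rintro ψ (hψ | hψ)
      · exact (hmod.symm ▸ hIQ) ψ hψ
      · exact hIo ψ (Or.inr hψ)
    · rintro ⟨K, hKo, hKgt⟩
      have hKP : K ∈ models P.gen := fun ψ hψ => hKo ψ (Or.inl hψ)
      have hKo' : K ∈ outcomes Sem.co (Q.union R) := by
        rintro ψ (hψ | hψ)
        · exact (hmod ▸ hKP) ψ hψ
        · exact hKo ψ (Or.inr hψ)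
      exact hIn ⟨K, hKo',
        gt_union_transfer hP hQ hsimPQ hgtPQ hKP (hmod.symm ▸ hIQ) hKgt⟩

end Aux

/-- Corollary 13: for simple CO problems, `P ≡^s_g Q`, `P ≡^{s,=1}_g Q`,
`P ≡^{s,=1} Q` and `P ≡^s Q` are all equivalent. -/
theorem stmt14 {U : Type} [Countable U] (P Q : OptProblem U)
    (hP : ∀ r ∈ P.sel, r.rank = 1) (hQ : ∀ r ∈ Q.sel, r.rank = 1) :
    (sgeqv Sem.co 1 ⊤ P Q ↔ sgeqv Sem.co 1 (1 : ℕ∞) P Q) ∧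
    (sgeqv Sem.co 1 ⊤ P Q ↔ seqv Sem.co 1 (1 : ℕ∞) P Q) ∧
    (sgeqv Sem.co 1 ⊤ P Q ↔ seqv Sem.co 1 ⊤ P Q) := by
  have hard' : seqv Sem.co 1 (1 : ℕ∞) P Q → sgeqv Sem.co 1 ⊤ P Q := hard_direction hP hQ
  have e1 : sgeqv Sem.co 1 ⊤ P Q → sgeqv Sem.co 1 (1 : ℕ∞) P Q :=
    fun h R hr => h R (fun r hrr => ⟨(hr r hrr).1, le_top⟩)
  have e2 : sgeqv Sem.co 1 (1 : ℕ∞) P Q → seqv Sem.co 1 (1 : ℕ∞) P Q :=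
    fun h R _ hr => h R hr
  have e3 : sgeqv Sem.co 1 ⊤ P Q → seqv Sem.co 1 ⊤ P Q := fun h R _ hr => h R hr
  have e4 : seqv Sem.co 1 ⊤ P Q → seqv Sem.co 1 (1 : ℕ∞) P Q :=
    fun h R hg hr => h R hg (fun r hrr => ⟨(hr r hrr).1, le_top⟩)
  exact ⟨⟨e1, fun h => hard' (e2 h)⟩, ⟨fun h => e2 (e1 h), hard'⟩,
    ⟨e3, fun h => hard' (e4 h)⟩⟩
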